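/- arXiv:2307.13627 — 2 statements merged into one kernel-verified Lean document; each statement's English description precedes it below -/
import Mathlib

section
/- Let X be a real n×k matrix with X'X symmetric positive definite, let σ be a permutation of {1, …, k}, and let Q_σ be the associated k×k permutation matrix, so that XQ_σ is the matrix whose columns are those of X permuted by σ. Then (XQ_σ)'(XQ_σ) is symmetric positive definite and (XQ_σ)((XQ_σ)'(XQ_σ))^{−1/2} = (X(X'X)^{−1/2})Q_σ; that is, the Gram–normalization map X ↦ X(X'X)^{−1/2} is equivariant under column permutations. -/
open Matrix

open scoped Classical in
/-- `A ↦ A^{-1/2}`: the inverse of the unique positive semidefinite square root of `A`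
(junk value `0` for non-PSD `A`). -/
noncomputable def invSqrt {k : ℕ} (A : Matrix (Fin k) (Fin k) ℝ) : Matrix (Fin k) (Fin k) ℝ :=
  if h : A.PosSemidef then
    (h.1.eigenvectorUnitary.1 * diagonal ((RCLike.ofReal : ℝ → ℝ) ∘ (√·) ∘ h.1.eigenvalues) *
      (star h.1.eigenvectorUnitary : Matrix (Fin k) (Fin k) ℝ))⁻¹ else 0

open scoped MatrixOrder

lemma invSqrt_eq {k : ℕ} {A : Matrix (Fin k) (Fin k) ℝ} (h : A.PosSemidef) :
    invSqrt A = (CFC.sqrt A)⁻¹ := by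
  rw [invSqrt, dif_pos h, CFC.sqrt_eq_cfc, cfc_nnreal_eq_real _ A, h.1.cfc_eq]
  congr 1
  simp only [IsHermitian.cfc, Unitary.conjStarAlgAut_apply]
  congr 3
  funext x
  have hx := h.eigenvalues_nonneg x
  simp [Real.coe_toNNReal', max_eq_left hx]

/-- Let `X` be a real `n×k` matrix with `X'X` symmetric positive definite,
`σ` a permutation of `{1, …, k}`, and `Q_σ` the associated permutation matrix, so that
`X Q_σ` has the columns of `X` permuted by `σ`. Then `(X Q_σ)'(X Q_σ)` is symmetric positive
definite and `(X Q_σ)((X Q_σ)'(X Q_σ))^{-1/2} = (X (X'X)^{-1/2}) Q_σ`: Gram–normalization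
is equivariant under column permutations. -/
theorem stmt_6 {n k : ℕ} (X : Matrix (Fin n) (Fin k) ℝ) (h : (Xᵀ * X).PosDef)
    (σ : Equiv.Perm (Fin k)) (Q : Matrix (Fin k) (Fin k) ℝ)
    (hQ : Q = Matrix.of fun i j => if i = σ j then (1 : ℝ) else 0) :
    ((X * Q)ᵀ * (X * Q)).PosDef ∧
      (X * Q) * invSqrt ((X * Q)ᵀ * (X * Q)) = X * invSqrt (Xᵀ * X) * Q := by
  have hQtQ : Qᵀ * Q = 1 := by
    ext i j
    simp only [hQ, mul_apply, transpose_apply, of_apply, one_apply, ite_mul, one_mul, zero_mul,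
      Finset.sum_ite_eq, Finset.mem_univ, if_true]
    by_cases hij : i = j <;> simp [hij, σ.injective.eq_iff, eq_comm]
  have hQQt : Q * Qᵀ = 1 := by
    ext i j
    simp only [hQ, mul_apply, transpose_apply, of_apply, one_apply]
    rw [Finset.sum_eq_single (σ.symm i)]
    · by_cases hij : i = j <;> simp_all [Equiv.eq_symm_apply, eq_comm]
    · intro b _ hb
      have : ¬ i = σ b := fun hc => hb (by simp [hc])
      simp [this]
    · simp
  have hQH : Qᴴ = Qᵀ := conjTranspose_eq_transpose_of_trivial Q
  set A := Xᵀ * X with hA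
  have hGram : (X * Q)ᵀ * (X * Q) = Qᵀ * A * Q := by
    rw [transpose_mul, hA]; simp only [Matrix.mul_assoc]
  have hQx : ∀ x : Fin k → ℝ, x ≠ 0 → Q *ᵥ x ≠ 0 := by
    intro x hx hzero
    apply hx
    have := congrArg (Qᵀ *ᵥ ·) hzero
    simpa [mulVec_mulVec, hQtQ] using this
  have hPD : ((X * Q)ᵀ * (X * Q)).PosDef := by
    rw [hGram]
    refine Matrix.PosDef.of_dotProduct_mulVec_pos ?_ ?_
    · have h1 := h.1
      rw [IsHermitian] at h1 ⊢
      rw [conjTranspose_mul, conjTranspose_mul, hQH, ← hQH, conjTranspose_conjTranspose, h1]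
      simp only [Matrix.mul_assoc]
    · intro x hx
      have h2 := h.dotProduct_mulVec_pos (hQx x hx)
      have key : star x ⬝ᵥ (Qᵀ * A * Q) *ᵥ x = star (Q *ᵥ x) ⬝ᵥ A *ᵥ (Q *ᵥ x) := by
        simp only [star_trivial]
        rw [Matrix.mul_assoc, ← Matrix.mulVec_mulVec, ← Matrix.mulVec_mulVec,
          Matrix.dotProduct_mulVec, Matrix.vecMul_transpose, Matrix.dotProduct_mulVec]
      rw [key]; exact h2
  refine ⟨hPD, ?_⟩
  set S := CFC.sqrt A with hS
  have hSsq : S * S = A := CFC.sqrt_mul_sqrt_self A h.posSemidef.nonneg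
  have hSpsd : S.PosSemidef := (CFC.sqrt_nonneg A).posSemidef
  have hSdet : IsUnit S.det := by
    have hAdet : IsUnit A.det := (Matrix.isUnit_iff_isUnit_det A).mp h.isUnit
    have : S.det * S.det = A.det := by rw [← Matrix.det_mul, hSsq]
    exact isUnit_of_mul_isUnit_left (this ▸ hAdet)
  have hSinv : S * S⁻¹ = 1 := Matrix.mul_nonsing_inv S hSdet
  have hsqrtB : CFC.sqrt ((X * Q)ᵀ * (X * Q)) = Qᵀ * S * Q := by
    have hpsd : (Qᵀ * S * Q).PosSemidef := by
      have := hSpsd.conjTranspose_mul_mul_same Q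
      rwa [hQH] at this
    have hsq : (Qᵀ * S * Q) ^ 2 = (X * Q)ᵀ * (X * Q) := by
      rw [hGram, pow_two]
      simp only [Matrix.mul_assoc]
      rw [← Matrix.mul_assoc Q Qᵀ, hQQt, Matrix.one_mul, ← Matrix.mul_assoc S S, hSsq]
    exact CFC.sqrt_unique (by rw [← pow_two]; exact hsq) hpsd.nonneg
  have hinv : (Qᵀ * S * Q)⁻¹ = Qᵀ * S⁻¹ * Q := by
    apply Matrix.inv_eq_right_inv
    simp only [Matrix.mul_assoc]
    rw [← Matrix.mul_assoc Q Qᵀ, hQQt, Matrix.one_mul, ← Matrix.mul_assoc S S⁻¹, hSinv,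
      Matrix.one_mul, hQtQ]
  rw [invSqrt_eq hPD.posSemidef, invSqrt_eq h.posSemidef, hsqrtB, hinv, ← hS]
  simp only [Matrix.mul_assoc]
  rw [← Matrix.mul_assoc Q Qᵀ, hQQt, Matrix.one_mul]
end

section
/- Let Z be a real n×m matrix, U = [u_1, …, u_k], V = [v_1, …, v_k], D = diag(d_1, …, d_k), Σ a symmetric positive definite n×n matrix, and E = Z − U_{−i}D_{−i}V_{−i}'. Suppose v_i'v_i = 1 and u_i = Nũ, where N is a real n×(n−k+1) matrix with N'N = I_{n−k+1} and ũ ∈ ℝ^{n−k+1}, and let Ω be a symmetric positive definite n×n matrix with N'ΩN invertible. Then the sum of the negative log-likelihood exponent and the prior exponent is, as a function of ũ, an exact quadratic form: −½·tr[(Z − UDV')'Σ⁻¹(Z − UDV')] − ½·d_i²·ũ'(N'ΩN)⁻¹ũ = −½(ũ'S ũ − 2 m'ũ) − ½·tr[E'Σ⁻¹E], where S = d_i²(N'ΩN)⁻¹ + d_i² N'Σ⁻¹N and m = d_i N'Σ⁻¹E v_i; hence the full conditional density of ũ is proportional, on the unit sphere, to the Gaussian kernel exp{−½(ũ − S⁻¹m)'S(ũ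 − S⁻¹m)}. -/
open Matrix

private lemma trace_mul_vecMulVec' {m n : ℕ} (P : Matrix (Fin m) (Fin n) ℝ) (a : Fin n → ℝ)
    (b : Fin m → ℝ) : (P * vecMulVec a b).trace = b ⬝ᵥ (P *ᵥ a) := by
  simp only [Matrix.trace, Matrix.diag, mul_apply, vecMulVec_apply, dotProduct, mulVec,
    Finset.mul_sum, Finset.sum_mul]
  exact Finset.sum_congr rfl fun j _ => Finset.sum_congr rfl fun r _ => by ring

private lemma decomp' {n m k : ℕ} (Z : Matrix (Fin n) (Fin m) ℝ)
    (U : Matrix (Fin n) (Fin (k + 1)) ℝ) (V : Matrix (Fin m) (Fin (k + 1)) ℝ)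
    (d : Fin (k + 1) → ℝ) (i : Fin (k + 1)) :
    Z - U * Matrix.diagonal d * Vᵀ
      = (Z - U.submatrix id i.succAbove
        * Matrix.diagonal (fun j => d (i.succAbove j)) * (V.submatrix id i.succAbove)ᵀ)
        - d i • vecMulVec (fun r => U r i) (fun c => V c i) := by
  ext r c
  simp only [Matrix.sub_apply, Matrix.smul_apply, vecMulVec_apply, mul_apply, transpose_apply,
    diagonal_apply, submatrix_apply, id_eq, smul_eq_mul, mul_ite, mul_zero,
    Finset.sum_ite_eq', Finset.mem_univ, if_true]
  rw [Fin.sum_univ_succAbove (fun x => U r x * d x * V c x) i]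
  ring

private lemma dotmv' {p q : ℕ} (A : Matrix (Fin p) (Fin q) ℝ) (x : Fin q → ℝ) (y : Fin p → ℝ) :
    (A *ᵥ x) ⬝ᵥ y = x ⬝ᵥ (Aᵀ *ᵥ y) := by
  rw [dotProduct_comm, dotProduct_mulVec, ← mulVec_transpose, dotProduct_comm]

private lemma vecMulVec_transpose' {p q : ℕ} (a : Fin p → ℝ) (b : Fin q → ℝ) :
    (vecMulVec a b)ᵀ = vecMulVec b a := by
  ext r c; simp [vecMulVec_apply, mul_comm]

private lemma vecMulVec_mulVec' {p q : ℕ} (a : Fin p → ℝ) (b : Fin q → ℝ) (x : Fin q → ℝ) :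
    vecMulVec a b *ᵥ x = (b ⬝ᵥ x) • a := by
  ext r
  simp only [mulVec, vecMulVec_apply, dotProduct, Pi.smul_apply, smul_eq_mul, Finset.sum_mul]
  exact Finset.sum_congr rfl fun j _ => by ring

private lemma posDef_smul' {p : ℕ} {M : Matrix (Fin p) (Fin p) ℝ} (hM : M.PosDef) {c : ℝ}
    (hc : 0 < c) : (c • M).PosDef := by
  refine Matrix.PosDef.of_dotProduct_mulVec_pos ?_ fun ⦃x⦄ hx => ?_
  · unfold Matrix.IsHermitian at *
    rw [conjTranspose_smul, hM.1]
    simp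
  · rw [smul_mulVec, dotProduct_smul, smul_eq_mul]
    exact mul_pos hc (hM.dotProduct_mulVec_pos hx)

private lemma posDef_conj' {p q : ℕ} {M : Matrix (Fin p) (Fin p) ℝ} (hM : M.PosDef)
    (N : Matrix (Fin p) (Fin q) ℝ) (hN : Nᵀ * N = 1) : (Nᵀ * M * N).PosDef := by
  have hMt : Mᵀ = M := by rw [← conjTranspose_eq_transpose_of_trivial]; exact hM.1
  have hinj : ∀ x : Fin q → ℝ, x ≠ 0 → N *ᵥ x ≠ 0 := by
    intro x hx h
    apply hx
    have h2 : Nᵀ *ᵥ (N *ᵥ x) = 0 := by rw [h, mulVec_zero]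
    rwa [mulVec_mulVec, hN, one_mulVec] at h2
  refine Matrix.PosDef.of_dotProduct_mulVec_pos ?_ fun ⦃x⦄ hx => ?_
  · unfold Matrix.IsHermitian
    rw [conjTranspose_eq_transpose_of_trivial, transpose_mul, transpose_mul,
      transpose_transpose, hMt]
    exact (Matrix.mul_assoc _ _ _).symm
  · rw [← mulVec_mulVec, ← mulVec_mulVec, star_trivial, ← dotmv']
    simpa [star_trivial] using hM.dotProduct_mulVec_pos (hinj x hx)

private lemma trace_expand' {n m' : ℕ} (Eo X : Matrix (Fin n) (Fin m') ℝ)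
    (M : Matrix (Fin n) (Fin n) ℝ) (a : ℝ) :
    ((Eo - a • X)ᵀ * M * (Eo - a • X)).trace
      = (Eoᵀ * M * Eo).trace - a * (Xᵀ * M * Eo).trace - a * (Eoᵀ * M * X).trace
        + a ^ 2 * (Xᵀ * M * X).trace := by
  simp only [transpose_sub, transpose_smul, Matrix.sub_mul, Matrix.mul_sub, Matrix.smul_mul,
    Matrix.mul_smul, trace_sub, trace_smul, smul_eq_mul, smul_smul]
  ring


open Matrix

/-- With `Z` `n×m`, `U, V, D = diag(d)`, `Σ` symmetric positive definite,
`E = Z − U_{−i} D_{−i} V_{−i}'`, `v_i'v_i = 1`, `u_i = Nũ` for an `n×(n−k+1)` matrix `N` with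
`N'N = I` and `ũ ∈ ℝ^{n−k+1}`, and `Ω` symmetric positive definite with `N'ΩN` invertible:
the sum of the negative log-likelihood exponent and the prior exponent is an exact quadratic
form in `ũ`,
`−½ tr[(Z − UDV')'Σ⁻¹(Z − UDV')] − ½ d_i² ũ'(N'ΩN)⁻¹ũ
  = −½ (ũ'Sũ − 2 m'ũ) − ½ tr[E'Σ⁻¹E]`,
with `S = d_i²(N'ΩN)⁻¹ + d_i² N'Σ⁻¹N` and `m = d_i N'Σ⁻¹E v_i`; hence on the unit sphere the
full conditional density of `ũ` is proportional to the Gaussian kernel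
`exp{−½ (ũ − S⁻¹m)'S(ũ − S⁻¹m)}`. (Columns are indexed by `Fin (k+1)`; deleting the `i`-th
column is `submatrix id i.succAbove`.) -/
theorem stmt_14 {n m k : ℕ} (Z : Matrix (Fin n) (Fin m) ℝ)
    (U : Matrix (Fin n) (Fin (k + 1)) ℝ) (V : Matrix (Fin m) (Fin (k + 1)) ℝ)
    (d : Fin (k + 1) → ℝ) (Sig Ω : Matrix (Fin n) (Fin n) ℝ)
    (hSig : Sig.PosDef) (hΩ : Ω.PosDef) (i : Fin (k + 1))
    (N : Matrix (Fin n) (Fin (n - k + 1)) ℝ) (hN : Nᵀ * N = 1)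
    (hNΩ : IsUnit (Nᵀ * Ω * N).det)
    (ut : Fin (n - k + 1) → ℝ) (hui : (fun r => U r i) = N *ᵥ ut)
    (hvi : (fun c => V c i) ⬝ᵥ (fun c => V c i) = 1)
    (E : Matrix (Fin n) (Fin m) ℝ)
    (hE : E = Z - U.submatrix id i.succAbove
        * Matrix.diagonal (fun j => d (i.succAbove j)) * (V.submatrix id i.succAbove)ᵀ)
    (S : Matrix (Fin (n - k + 1)) (Fin (n - k + 1)) ℝ)
    (hS : S = d i ^ 2 • (Nᵀ * Ω * N)⁻¹ + d i ^ 2 • (Nᵀ * Sig⁻¹ * N))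
    (mv : Fin (n - k + 1) → ℝ)
    (hm : mv = d i • (Nᵀ *ᵥ (Sig⁻¹ *ᵥ (E *ᵥ fun c => V c i)))) :
    (-(1 / 2 : ℝ)
          * ((Z - U * Matrix.diagonal d * Vᵀ)ᵀ * Sig⁻¹
              * (Z - U * Matrix.diagonal d * Vᵀ)).trace
        - (1 / 2 : ℝ) * (d i ^ 2 * (ut ⬝ᵥ ((Nᵀ * Ω * N)⁻¹ *ᵥ ut)))
      = -(1 / 2 : ℝ) * ((ut ⬝ᵥ (S *ᵥ ut)) - 2 * (mv ⬝ᵥ ut))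
        - (1 / 2 : ℝ) * (Eᵀ * Sig⁻¹ * E).trace) ∧
    ∃ c : ℝ, 0 < c ∧ ∀ w : Fin (n - k + 1) → ℝ, w ⬝ᵥ w = 1 →
      Real.exp (-(1 / 2 : ℝ) * ((w ⬝ᵥ (S *ᵥ w)) - 2 * (mv ⬝ᵥ w)))
        = c * Real.exp (-(1 / 2 : ℝ)
            * ((w - S⁻¹ *ᵥ mv) ⬝ᵥ (S *ᵥ (w - S⁻¹ *ᵥ mv)))) := by
  have hSigt : Sigᵀ = Sig := by
    rw [← conjTranspose_eq_transpose_of_trivial]; exact hSig.1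
  have hMt : (Sig⁻¹)ᵀ = Sig⁻¹ := by rw [transpose_nonsing_inv, hSigt]
  have symA : (Nᵀ * Ω * N)ᵀ = Nᵀ * Ω * N := by
    rw [← conjTranspose_eq_transpose_of_trivial]; exact (posDef_conj' hΩ N hN).1
  have symB : (Nᵀ * Sig⁻¹ * N)ᵀ = Nᵀ * Sig⁻¹ * N := by
    rw [← conjTranspose_eq_transpose_of_trivial]; exact (posDef_conj' hSig.inv N hN).1
  have hSsym : Sᵀ = S := by
    rw [hS, transpose_add, transpose_smul, transpose_smul, transpose_nonsing_inv, symA, symB]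
  have hSp : S *ᵥ (S⁻¹ *ᵥ mv) = mv := by
    by_cases hd : d i = 0
    · rw [hm, hd]; simp
    · have hpos : S.PosDef := by
        rw [hS, ← smul_add]
        exact posDef_smul' ((posDef_conj' hΩ N hN).inv.add (posDef_conj' hSig.inv N hN))
          (by positivity)
      have hdet : IsUnit S.det := isUnit_iff_ne_zero.mpr (ne_of_gt hpos.det_pos)
      rw [mulVec_mulVec, mul_nonsing_inv S hdet, one_mulVec]
  constructor
  · -- part 1
    have hA : Z - U * Matrix.diagonal d * Vᵀ
        = E - d i • vecMulVec (fun r => U r i) (fun c => V c i) := by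
      rw [decomp' Z U V d i, ← hE]
    have hcross2 : ((vecMulVec (fun r => U r i) (fun c => V c i))ᵀ * Sig⁻¹ * E).trace
        = (Eᵀ * Sig⁻¹ * vecMulVec (fun r => U r i) (fun c => V c i)).trace := by
      rw [← trace_transpose (Eᵀ * Sig⁻¹ * vecMulVec (fun r => U r i) (fun c => V c i)),
        transpose_mul, transpose_mul, transpose_transpose, hMt, Matrix.mul_assoc]
    have hc1 : (Eᵀ * Sig⁻¹ * vecMulVec (fun r => U r i) (fun c => V c i)).trace
        = (fun c => V c i) ⬝ᵥ ((Eᵀ * Sig⁻¹) *ᵥ fun r => U r i) :=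
      trace_mul_vecMulVec' _ _ _
    have hc2 : (fun c => V c i) ⬝ᵥ ((Eᵀ * Sig⁻¹) *ᵥ fun r => U r i)
        = ut ⬝ᵥ (Nᵀ *ᵥ (Sig⁻¹ *ᵥ (E *ᵥ fun c => V c i))) := by
      rw [hui, ← mulVec_mulVec, ← dotmv' E, dotProduct_comm, dotmv' Sig⁻¹, hMt,
        dotmv' N]
    have hmv : mv ⬝ᵥ ut = d i * (ut ⬝ᵥ (Nᵀ *ᵥ (Sig⁻¹ *ᵥ (E *ᵥ fun c => V c i)))) := by
      rw [hm, smul_dotProduct, smul_eq_mul, dotProduct_comm]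
    have hq : ((vecMulVec (fun r => U r i) (fun c => V c i))ᵀ * Sig⁻¹
          * vecMulVec (fun r => U r i) (fun c => V c i)).trace
        = ut ⬝ᵥ ((Nᵀ * Sig⁻¹ * N) *ᵥ ut) := by
      rw [trace_mul_vecMulVec', ← mulVec_mulVec, vecMulVec_transpose', vecMulVec_mulVec',
        dotProduct_smul, smul_eq_mul, hvi, mul_one, hui, dotmv' N, mulVec_mulVec,
        mulVec_mulVec]
    have hSut : ut ⬝ᵥ (S *ᵥ ut)
        = d i ^ 2 * (ut ⬝ᵥ ((Nᵀ * Ω * N)⁻¹ *ᵥ ut))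
          + d i ^ 2 * (ut ⬝ᵥ ((Nᵀ * Sig⁻¹ * N) *ᵥ ut)) := by
      rw [hS, add_mulVec, smul_mulVec, smul_mulVec, dotProduct_add,
        dotProduct_smul, dotProduct_smul, smul_eq_mul, smul_eq_mul]
    rw [hA, trace_expand', hcross2, hc1, hc2, hSut, hmv, hq]
    ring
  · refine ⟨Real.exp ((1 / 2 : ℝ) * ((S⁻¹ *ᵥ mv) ⬝ᵥ mv)), Real.exp_pos _, fun w hw => ?_⟩
    rw [← Real.exp_add]
    congr 1
    have h1 : S *ᵥ (w - S⁻¹ *ᵥ mv) = S *ᵥ w - mv := by rw [mulVec_sub, hSp]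
    have h3 : (S⁻¹ *ᵥ mv) ⬝ᵥ (S *ᵥ w) = mv ⬝ᵥ w := by
      rw [dotProduct_mulVec, ← mulVec_transpose, hSsym, hSp]
    rw [h1, dotProduct_sub, sub_dotProduct, sub_dotProduct, h3,
      dotProduct_comm w mv]
    ring
end
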